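/- For every integer t ≥ 0, |K_t| ≤ 2r, where r is the number of maximal runs of equal characters in the BWT L of T; in particular max{|K_0|, |K_1|, …, |K_n|} ≤ 2r. -/

import Mathlib

/-- 1-based access to the `i`-th character of `T`. -/
def idx (T : List ℕ) (i : ℕ) : ℕ := T.getD (i - 1) 0

/-- The suffix `T[i..n]` (1-based). -/
def sufx (T : List ℕ) (i : ℕ) : List ℕ := T.drop (i - 1)

/-- Occurrence positions of `P` in `T`: `Occ(T,P) = {i ∈ [1, n−|P|+1] : P = T[i..i+|P|−1]}`. -/
def OccF (T P : List ℕ) : Finset ℕ :=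
  (Finset.Icc 1 (T.length - P.length + 1)).filter (fun i => P <+: T.drop (i - 1))

/-- `children(P) = {Pc : c ∈ Σ, Pc is a substring of T}`. -/
def childrenSet (σ : ℕ) (T P : List ℕ) : Set (List ℕ) :=
  {Q | ∃ c ∈ Finset.Icc 1 σ, Q = P ++ [c] ∧ (P ++ [c]) <:+: T}

/-- Starting positions of the maximal runs of equal characters in `L[1..n]`. -/
def SstartSet (n : ℕ) (L : ℕ → ℕ) : Finset ℕ :=
  (Finset.Icc 1 n).filter (fun i => i = 1 ∨ L i ≠ L (i - 1))

/-- `rank(S, i) = |{j ∈ S : j ≤ i}|`. -/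
def rankOf (S : Finset ℕ) (i : ℕ) : ℕ := (S.filter (fun j => j ≤ i)).card

/-- `(c, p, q)` is an answer of the range distinct query `RD(S, b, e)`:
`c` occurs in `S[b..e]`, and `p`, `q` are the first and last occurrences of `c` in `[b,e]`. -/
def RDmem (S : ℕ → ℕ) (b e c p q : ℕ) : Prop :=
  p ∈ Finset.Icc b e ∧ S p = c ∧ (∀ i ∈ Finset.Icc b e, S i = c → p ≤ i) ∧
  q ∈ Finset.Icc b e ∧ S q = c ∧ (∀ i ∈ Finset.Icc b e, S i = c → i ≤ q)

/-- `[b,e]` is the suffix-tree interval of `P`: the positions `i ∈ [1,n]` whose suffix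
`T[SA[i]..n]` has `P` as a prefix are exactly `{b,…,e}`. -/
def isIntervalOf (n : ℕ) (T : List ℕ) (SA : ℕ → ℕ) (P : List ℕ) (b e : ℕ) : Prop :=
  1 ≤ b ∧ e ≤ n ∧ ∀ i ∈ Finset.Icc 1 n, (P <+: sufx T (SA i) ↔ i ∈ Finset.Icc b e)

/-- Length of the longest common prefix of two lists. -/
def lcpLen : List ℕ → List ℕ → ℕ
  | a :: as, b :: bs => if a = b then lcpLen as bs + 1 else 0
  | _, _ => 0

/-- `𝓛_t`: substrings of `T` of length `t` whose suffix-tree node is explicit. -/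
def LsetD (σ t : ℕ) (T : List ℕ) : Set (List ℕ) :=
  {P | P <:+: T ∧ P.length = t ∧ 2 ≤ (childrenSet σ T P).ncard}

/-- `K_t = ⋃_{P ∈ 𝓛_t} children(P)`. -/
def KsetD (σ t : ℕ) (T : List ℕ) : Set (List ℕ) :=
  {Q | ∃ P ∈ LsetD σ t T, Q ∈ childrenSet σ T P}

/-- `K'_t`: members of `K_t` that are not the last child of their parent, i.e. whose
interval has a right endpoint different from that of the parent's interval. -/
def KpsetD (σ n t : ℕ) (T : List ℕ) (SA : ℕ → ℕ) : Set (List ℕ) :=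
  {Q | ∃ P ∈ LsetD σ t T, Q ∈ childrenSet σ T P ∧
    ∃ b e b' e' : ℕ, isIntervalOf n T SA P b e ∧ isIntervalOf n T SA Q b' e' ∧ e' ≠ e}


namespace Aux

abbrev LexLt (x y : List ℕ) : Prop := List.Lex (· < ·) x y

theorem lex_irrefl : ∀ x : List ℕ, ¬ LexLt x x := by
  intro x h
  induction x with
  | nil => cases h
  | cons a l ih =>
    cases h with
    | cons h => exact ih h
    | rel h => exact lt_irrefl _ h

theorem lex_asymm : ∀ x y : List ℕ, LexLt x y → LexLt y x → False := by
  intro x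
  induction x with
  | nil => intro y h1 h2; cases h2
  | cons a l ih =>
    intro y h1 h2
    cases y with
    | nil => cases h1
    | cons b m =>
      cases h1 with
      | cons h1' => cases h2 with
        | cons h2' => exact ih m h1' h2'
        | rel hr => exact lt_irrefl _ hr
      | rel hr1 => cases h2 with
        | cons h2' => exact lt_irrefl _ hr1
        | rel hr2 => exact lt_asymm hr1 hr2

theorem lex_total : ∀ x y : List ℕ, x ≠ y → LexLt x y ∨ LexLt y x := by
  intro x
  induction x with
  | nil => intro y hne; cases y with
    | nil => exact absurd rfl hne
    | cons b m => exact Or.inl (List.Lex.nil)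
  | cons a l ih =>
    intro y hne
    cases y with
    | nil => exact Or.inr List.Lex.nil
    | cons b m =>
      rcases lt_trichotomy a b with h | h | h
      · exact Or.inl (List.Lex.rel h)
      · subst h
        have hne' : l ≠ m := by intro he; exact hne (by rw [he])
        rcases ih m hne' with h' | h'
        · exact Or.inl (List.Lex.cons h')
        · exact Or.inr (List.Lex.cons h')
      · exact Or.inr (List.Lex.rel h)

theorem lex_cons_inv {a : ℕ} {x y : List ℕ} (h : LexLt (a :: x) (a :: y)) : LexLt x y := by
  cases h with
  | cons h => exact h
  | rel h => exact absurd h (lt_irrefl a)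

theorem head_between {a : ℕ} {x y z : List ℕ} (h1 : LexLt (a :: x) z) (h2 : LexLt z (a :: y)) :
    ∃ z', z = a :: z' := by
  cases z with
  | nil => cases h1
  | cons b m =>
    refine ⟨m, ?_⟩
    cases h1 with
    | cons h => rfl
    | rel hab =>
      cases h2 with
      | cons h => rfl
      | rel hba => exact absurd (lt_trans hab hba) (lt_irrefl a)

theorem prefix_sandwich : ∀ (Q x y z : List ℕ), Q <+: x → Q <+: z →
    (LexLt x y ∨ x = y) → (LexLt y z ∨ y = z) → Q <+: y := by
  intro Q
  induction Q with
  | nil => intro _ _ _ _ _ _ _; exact List.nil_prefix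
  | cons q Q' ih =>
    intro x y z hx hz hxy hyz
    rcases hxy with hxy | rfl
    · rcases hyz with hyz | rfl
      · cases x with
        | nil => exact absurd hx (by simp)
        | cons a x' =>
          obtain ⟨rfl, hx'⟩ := List.cons_prefix_cons.mp hx
          cases z with
          | nil => exact absurd hz (by simp)
          | cons c z' =>
            obtain ⟨rfl, hz'⟩ := List.cons_prefix_cons.mp hz
            obtain ⟨y', rfl⟩ := head_between hxy hyz
            exact List.cons_prefix_cons.mpr ⟨rfl, ih x' y' z' hx' hz'
              (Or.inl (lex_cons_inv hxy)) (Or.inl (lex_cons_inv hyz))⟩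
      · exact hz
    · exact hx

theorem lcpLen_cons_same (a : ℕ) (x y : List ℕ) : lcpLen (a :: x) (a :: y) = lcpLen x y + 1 := by
  simp [lcpLen]

theorem lcpLen_comm : ∀ x y : List ℕ, lcpLen x y = lcpLen y x := by
  intro x
  induction x with
  | nil => intro y; cases y <;> simp [lcpLen]
  | cons a l ih =>
    intro y
    cases y with
    | nil => simp [lcpLen]
    | cons b m =>
      by_cases h : a = b
      · subst h; simp [lcpLen, ih]
      · have h' : ¬ b = a := fun hh => h hh.symm
        simp [lcpLen, h, h']

theorem lcpLen_ge : ∀ (P x y : List ℕ), P <+: x → P <+: y → P.length ≤ lcpLen x y := by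
  intro P
  induction P with
  | nil => intro x y _ _; simp
  | cons p P' ih =>
    intro x y hx hy
    cases x with
    | nil => exact absurd hx (by simp)
    | cons a x' =>
      obtain ⟨rfl, hx'⟩ := List.cons_prefix_cons.mp hx
      cases y with
      | nil => exact absurd hy (by simp)
      | cons b y' =>
        obtain ⟨rfl, hy'⟩ := List.cons_prefix_cons.mp hy
        rw [lcpLen_cons_same]
        simpa using Nat.add_le_add_right (ih x' y' hx' hy') 1

theorem lcpLen_le : ∀ (P : List ℕ) (c : ℕ) (x y : List ℕ),
    (P ++ [c]) <+: x → P <+: y → ¬ ((P ++ [c]) <+: y) → lcpLen x y ≤ P.length := by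
  intro P
  induction P with
  | nil =>
    intro c x y hx _ hy
    cases x with
    | nil => exact absurd hx (by simp)
    | cons a x' =>
      have hca : c = a := by simpa using hx
      subst hca
      cases y with
      | nil => simp [lcpLen]
      | cons b y' =>
        have hb : ¬ (c = b) := by
          intro h; subst h
          exact hy (by simp [List.cons_prefix_cons])
        simp [lcpLen, hb]
  | cons p P' ih =>
    intro c x y hx hy hny
    cases x with
    | nil => exact absurd hx (by simp)
    | cons a x' =>
      obtain ⟨rfl, hx'⟩ := List.cons_prefix_cons.mp (by simpa using hx)
      cases y with
      | nil => simp [lcpLen]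
      | cons b y' =>
        obtain ⟨rfl, hy'⟩ := List.cons_prefix_cons.mp hy
        rw [lcpLen_cons_same]
        have hny' : ¬ ((P' ++ [c]) <+: y') := by
          intro h; exact hny (by simpa [List.cons_prefix_cons] using h)
        simpa using Nat.add_le_add_right (ih c x' y' hx' hy' hny') 1

theorem prefix_eq_of_length_eq {Q Q' s : List ℕ} (h1 : Q <+: s) (h2 : Q' <+: s)
    (h : Q.length = Q'.length) : Q = Q' := by
  rw [List.prefix_iff_eq_take.mp h1, List.prefix_iff_eq_take.mp h2, h]

end Aux

namespace Aux

def levD (T : List ℕ) (SA : ℕ → ℕ) (i : ℕ) : ℕ :=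
  lcpLen (sufx T (SA (i-1))) (sufx T (SA i))

def AtD (n t : ℕ) (T : List ℕ) (SA : ℕ → ℕ) : Finset ℕ :=
  (Finset.Icc 2 n).filter (fun i => levD T SA i = t)

def RowsD (n : ℕ) (T : List ℕ) (SA : ℕ → ℕ) (Q : List ℕ) : Finset ℕ :=
  (Finset.Icc 1 n).filter (fun i => Q <+: sufx T (SA i))

def chainF (b : ℕ → Bool) (g : ℕ → ℕ) : ℕ → ℕ → ℕ
  | 0, i => i
  | k+1, i => if b i then i else chainF b g k (g i)

section SAth

variable {σ n : ℕ} {T : List ℕ} {SA LF L : ℕ → ℕ}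

theorem sufx_cons_of (hlen : T.length = n) {p : ℕ} (h1 : 1 ≤ p) (h2 : p < n) :
    sufx T p = idx T p :: sufx T (p+1) := by
  have hp : p - 1 < T.length := by omega
  have := List.drop_eq_getElem_cons hp
  unfold sufx idx
  rw [this, List.getD_eq_getElem T 0 hp]
  congr 1
  · congr 1
    omega

theorem sufx_last (hlen : T.length = n) (hn : 1 ≤ n) : sufx T n = [idx T n] := by
  have hp : n - 1 < T.length := by omega
  unfold sufx idx
  rw [List.drop_eq_getElem_cons hp, List.getD_eq_getElem T 0 hp]
  have : n - 1 + 1 = n := by omega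
  rw [this]
  simp [List.drop_eq_nil_of_le, hlen.le]

theorem row_lt_of_lex
    (hSA_sorted : ∀ i j, i ∈ Finset.Icc 1 n → j ∈ Finset.Icc 1 n → i < j →
      List.Lex (· < ·) (sufx T (SA i)) (sufx T (SA j)))
    {i j : ℕ} (hi : i ∈ Finset.Icc 1 n) (hj : j ∈ Finset.Icc 1 n)
    (h : LexLt (sufx T (SA i)) (sufx T (SA j))) : i < j := by
  rcases lt_trichotomy i j with h' | rfl | h'
  · exact h'
  · exact absurd h (lex_irrefl _)
  · exact absurd (hSA_sorted j i hj hi h') (fun h2 => lex_asymm _ _ h h2)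

theorem SA_inj
    (hSA_sorted : ∀ i j, i ∈ Finset.Icc 1 n → j ∈ Finset.Icc 1 n → i < j →
      List.Lex (· < ·) (sufx T (SA i)) (sufx T (SA j)))
    {i j : ℕ} (hi : i ∈ Finset.Icc 1 n) (hj : j ∈ Finset.Icc 1 n)
    (h : SA i = SA j) : i = j := by
  rcases lt_trichotomy i j with h' | h' | h'
  · have := hSA_sorted i j hi hj h'
    rw [h] at this
    exact absurd this (lex_irrefl _)
  · exact h'
  · have := hSA_sorted j i hj hi h'
    rw [h] at this
    exact absurd this (lex_irrefl _)

theorem rows_convex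
    (hSA_sorted : ∀ i j, i ∈ Finset.Icc 1 n → j ∈ Finset.Icc 1 n → i < j →
      List.Lex (· < ·) (sufx T (SA i)) (sufx T (SA j)))
    {w1 w2 w3 : ℕ} (h1 : w1 ∈ Finset.Icc 1 n) (h2 : w2 ∈ Finset.Icc 1 n)
    (h3 : w3 ∈ Finset.Icc 1 n) (h12 : w1 ≤ w2) (h23 : w2 ≤ w3) {S : List ℕ}
    (hp1 : S <+: sufx T (SA w1)) (hp3 : S <+: sufx T (SA w3)) : S <+: sufx T (SA w2) := by
  apply prefix_sandwich S (sufx T (SA w1)) (sufx T (SA w2)) (sufx T (SA w3)) hp1 hp3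
  · rcases eq_or_lt_of_le h12 with rfl | h
    · exact Or.inr rfl
    · exact Or.inl (hSA_sorted _ _ h1 h2 h)
  · rcases eq_or_lt_of_le h23 with rfl | h
    · exact Or.inr rfl
    · exact Or.inl (hSA_sorted _ _ h2 h3 h)

end SAth

end Aux

namespace Aux

section Step

variable {n : ℕ} {T : List ℕ} {SA LF L : ℕ → ℕ}
variable (hn : 2 ≤ n) (hlen : T.length = n)
variable (hdollar : ∀ i ∈ Finset.Icc 1 (n - 1), idx T i ≠ idx T n)
variable (hSA_mem : ∀ i ∈ Finset.Icc 1 n, SA i ∈ Finset.Icc 1 n)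
variable (hSA_surj : ∀ j ∈ Finset.Icc 1 n, ∃ i ∈ Finset.Icc 1 n, SA i = j)
variable (hSA_sorted : ∀ i j, i ∈ Finset.Icc 1 n → j ∈ Finset.Icc 1 n → i < j →
      List.Lex (· < ·) (sufx T (SA i)) (sufx T (SA j)))
variable (hLF_mem : ∀ i ∈ Finset.Icc 1 n, LF i ∈ Finset.Icc 1 n)
variable (hLF : ∀ i ∈ Finset.Icc 1 n, SA i ≠ 1 → SA (LF i) = SA i - 1)
variable (hLF1 : ∀ i ∈ Finset.Icc 1 n, SA i = 1 → SA (LF i) = n)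
variable (hL : ∀ i ∈ Finset.Icc 1 n, L i = idx T (SA (LF i)))

include hn hlen hdollar hSA_mem hSA_surj hSA_sorted hLF_mem hLF hLF1 hL

theorem step_lemma {i : ℕ} (hi : i ∈ Finset.Icc 2 n) (hLeq : L i = L (i-1)) :
    LF i ∈ Finset.Icc 2 n ∧ LF (i-1) = LF i - 1 ∧ SA (LF i) = SA i - 1 ∧ 2 ≤ SA i ∧
      levD T SA (LF i) = levD T SA i + 1 := by
  rw [Finset.mem_Icc] at hi
  have hiI : i ∈ Finset.Icc 1 n := Finset.mem_Icc.mpr ⟨by omega, hi.2⟩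
  have hi1I : i - 1 ∈ Finset.Icc 1 n := Finset.mem_Icc.mpr ⟨by omega, by omega⟩
  have hSAiI := hSA_mem i hiI
  have hSAi1I := hSA_mem (i-1) hi1I
  rw [Finset.mem_Icc] at hSAiI hSAi1I
  have hne : SA i ≠ SA (i-1) := by
    intro h
    have := SA_inj hSA_sorted hiI hi1I h
    omega
  -- L values as text characters
  have hchar : ∀ j, j ∈ Finset.Icc 1 n → SA j ≠ 1 → L j = idx T (SA j - 1) := by
    intro j hj h1
    rw [hL j hj, hLF j hj h1]
  have h1i : SA i ≠ 1 := by
    intro h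
    have h1i1 : SA (i-1) ≠ 1 := fun hh => hne (h.trans hh.symm)
    have hLi : L i = idx T n := by rw [hL i hiI, hLF1 i hiI h]
    have hLi1 : L (i-1) = idx T (SA (i-1) - 1) := hchar _ hi1I h1i1
    exact hdollar (SA (i-1) - 1) (Finset.mem_Icc.mpr ⟨by omega, by omega⟩)
      (by rw [← hLi1, ← hLeq, hLi])
  have h1i1 : SA (i-1) ≠ 1 := by
    intro h
    have hLi1 : L (i-1) = idx T n := by rw [hL (i-1) hi1I, hLF1 (i-1) hi1I h]
    have hLi : L i = idx T (SA i - 1) := hchar _ hiI h1i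
    exact hdollar (SA i - 1) (Finset.mem_Icc.mpr ⟨by omega, by omega⟩)
      (by rw [← hLi, hLeq, hLi1])
  have hSAu : SA (LF (i-1)) = SA (i-1) - 1 := hLF (i-1) hi1I h1i1
  have hSAv : SA (LF i) = SA i - 1 := hLF i hiI h1i
  have huI : LF (i-1) ∈ Finset.Icc 1 n := hLF_mem (i-1) hi1I
  have hvI : LF i ∈ Finset.Icc 1 n := hLF_mem i hiI
  rw [Finset.mem_Icc] at huI hvI
  set u := LF (i-1) with hu
  set v := LF i with hv
  -- heads
  have hsufu : sufx T (SA u) = L i :: sufx T (SA (i-1)) := by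
    have h' := sufx_cons_of hlen (p := SA u) (by omega) (by omega)
    rw [h']
    have e1 : SA u + 1 = SA (i-1) := by omega
    have e2 : idx T (SA u) = L (i-1) := by rw [hchar (i-1) hi1I h1i1, hSAu]
    rw [e1, e2, hLeq]
  have hsufv : sufx T (SA v) = L i :: sufx T (SA i) := by
    have h' := sufx_cons_of hlen (p := SA v) (by omega) (by omega)
    rw [h']
    have e1 : SA v + 1 = SA i := by omega
    have e2 : idx T (SA v) = L i := by rw [hchar i hiI h1i, hSAv]
    rw [e1, e2]
  have hlexuv : LexLt (sufx T (SA u)) (sufx T (SA v)) := by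
    rw [hsufu, hsufv]
    exact List.Lex.cons (hSA_sorted (i-1) i hi1I hiI (by omega))
  have huv : u < v := row_lt_of_lex hSA_sorted
    (Finset.mem_Icc.mpr ⟨huI.1, huI.2⟩) (Finset.mem_Icc.mpr ⟨hvI.1, hvI.2⟩) hlexuv
  have hLiDollar : L i ≠ idx T n := by
    rw [hchar i hiI h1i]
    exact hdollar (SA i - 1) (Finset.mem_Icc.mpr ⟨by omega, by omega⟩)
  have hveq : v = u + 1 := by
    by_contra hne'
    have hltm : u + 1 < v := by omega
    have hmI : u + 1 ∈ Finset.Icc 1 n := Finset.mem_Icc.mpr ⟨by omega, by omega⟩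
    have hlex1 := hSA_sorted u (u+1) (Finset.mem_Icc.mpr ⟨huI.1, huI.2⟩) hmI (by omega)
    have hlex2 := hSA_sorted (u+1) v hmI (Finset.mem_Icc.mpr ⟨hvI.1, hvI.2⟩) hltm
    rw [hsufu] at hlex1
    rw [hsufv] at hlex2
    obtain ⟨z', hz⟩ := head_between hlex1 hlex2
    have hSAmI := hSA_mem (u+1) hmI
    rw [Finset.mem_Icc] at hSAmI
    have hSAmlt : SA (u+1) < n := by
      rcases eq_or_lt_of_le hSAmI.2 with h | h
      · exfalso
        rw [h, sufx_last hlen (by omega)] at hz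
        exact hLiDollar (by rw [List.cons.injEq] at hz; exact hz.1.symm)
      · exact h
    have hsm := sufx_cons_of hlen (p := SA (u+1)) (by omega) hSAmlt
    rw [hsm, List.cons.injEq] at hz
    obtain ⟨w, hwI, hw⟩ := hSA_surj (SA (u+1) + 1) (Finset.mem_Icc.mpr ⟨by omega, by omega⟩)
    have hzw : sufx T (SA w) = z' := by rw [hw, ← hz.2]
    have hA : LexLt (sufx T (SA (i-1))) (sufx T (SA w)) := by
      rw [hzw]
      rw [hz.1, hz.2] at hsm
      rw [hsm] at hlex1
      exact lex_cons_inv hlex1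
    have hB : LexLt (sufx T (SA w)) (sufx T (SA i)) := by
      rw [hzw]
      rw [hz.1, hz.2] at hsm
      rw [hsm] at hlex2
      exact lex_cons_inv hlex2
    have h1' := row_lt_of_lex hSA_sorted hi1I hwI hA
    have h2' := row_lt_of_lex hSA_sorted hwI hiI hB
    omega
  refine ⟨Finset.mem_Icc.mpr ⟨by omega, by omega⟩, by omega, hSAv, by omega, ?_⟩
  unfold levD
  have e : v - 1 = u := by omega
  rw [e, hsufu, hsufv, lcpLen_cons_same]

end Step

end Aux

namespace Aux

section Chain

variable {n : ℕ} {T : List ℕ} {SA LF L : ℕ → ℕ}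
variable (hn : 2 ≤ n) (hlen : T.length = n)
variable (hdollar : ∀ i ∈ Finset.Icc 1 (n - 1), idx T i ≠ idx T n)
variable (hSA_mem : ∀ i ∈ Finset.Icc 1 n, SA i ∈ Finset.Icc 1 n)
variable (hSA_surj : ∀ j ∈ Finset.Icc 1 n, ∃ i ∈ Finset.Icc 1 n, SA i = j)
variable (hSA_sorted : ∀ i j, i ∈ Finset.Icc 1 n → j ∈ Finset.Icc 1 n → i < j →
      List.Lex (· < ·) (sufx T (SA i)) (sufx T (SA j)))
variable (hLF_mem : ∀ i ∈ Finset.Icc 1 n, LF i ∈ Finset.Icc 1 n)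
variable (hLF : ∀ i ∈ Finset.Icc 1 n, SA i ≠ 1 → SA (LF i) = SA i - 1)
variable (hLF1 : ∀ i ∈ Finset.Icc 1 n, SA i = 1 → SA (LF i) = n)
variable (hL : ∀ i ∈ Finset.Icc 1 n, L i = idx T (SA (LF i)))


theorem chainF_stop {b : ℕ → Bool} {g : ℕ → ℕ} {k i : ℕ} (h : b i = true) :
    chainF b g (k+1) i = i := by simp [chainF, h]

theorem chainF_go {b : ℕ → Bool} {g : ℕ → ℕ} {k i : ℕ} (h : b i = false) :
    chainF b g (k+1) i = chainF b g k (g i) := by simp [chainF, h]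

include hn hlen hdollar hSA_mem hSA_surj hSA_sorted hLF_mem hLF hLF1 hL

theorem chain_spec : ∀ fuel : ℕ, ∀ i : ℕ, i ∈ Finset.Icc 2 n → SA i ≤ fuel →
    chainF (fun k => decide (¬ L k = L (k-1))) LF fuel i ∈ Finset.Icc 2 n ∧
    ¬ L (chainF (fun k => decide (¬ L k = L (k-1))) LF fuel i)
      = L (chainF (fun k => decide (¬ L k = L (k-1))) LF fuel i - 1) ∧
    levD T SA i ≤ levD T SA (chainF (fun k => decide (¬ L k = L (k-1))) LF fuel i) := by
  intro fuel
  induction fuel with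
  | zero =>
    intro i hi hf
    exfalso
    have := hSA_mem i (Finset.mem_Icc.mpr ⟨by
      rw [Finset.mem_Icc] at hi; omega, (Finset.mem_Icc.mp hi).2⟩)
    rw [Finset.mem_Icc] at this
    omega
  | succ k ih =>
    intro i hi hf
    by_cases hstop : ¬ L i = L (i-1)
    · rw [chainF_stop (by simp [hstop])]
      exact ⟨hi, hstop, le_refl _⟩
    · push_neg at hstop
      rw [chainF_go (b := fun k => decide (¬ L k = L (k-1))) (by simp [hstop])]
      obtain ⟨hmem, hprev, hSAv, hSAi2, hlev⟩ :=
        step_lemma hn hlen hdollar hSA_mem hSA_surj hSA_sorted hLF_mem hLF hLF1 hL hi hstop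
      have hf' : SA (LF i) ≤ k := by omega
      obtain ⟨a, b, c⟩ := ih (LF i) hmem hf'
      exact ⟨a, b, by omega⟩

theorem chain_inj : ∀ fuel : ℕ, ∀ i j : ℕ, i ∈ Finset.Icc 2 n → j ∈ Finset.Icc 2 n →
    SA i ≤ fuel → SA j ≤ fuel → levD T SA i = levD T SA j →
    chainF (fun k => decide (¬ L k = L (k-1))) LF fuel i
      = chainF (fun k => decide (¬ L k = L (k-1))) LF fuel j → i = j := by
  intro fuel
  induction fuel with
  | zero =>
    intro i j hi hj hfi hfj _ _
    exfalso
    have := hSA_mem i (Finset.mem_Icc.mpr ⟨by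
      rw [Finset.mem_Icc] at hi; omega, (Finset.mem_Icc.mp hi).2⟩)
    rw [Finset.mem_Icc] at this
    omega
  | succ k ih =>
    intro i j hi hj hfi hfj hlev heq
    by_cases hsi : ¬ L i = L (i-1) <;> by_cases hsj : ¬ L j = L (j-1)
    · rw [chainF_stop (i := i) (by simp [hsi]), chainF_stop (i := j) (by simp [hsj])] at heq
      exact heq
    · -- i stops, j steps
      push_neg at hsj
      rw [chainF_stop (i := i) (by simp [hsi]), chainF_go (b := fun k => decide (¬ L k = L (k-1))) (i := j) (by simp [hsj])] at heq
      obtain ⟨hmem, _, _, hSAj2, hlevj⟩ :=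
        step_lemma hn hlen hdollar hSA_mem hSA_surj hSA_sorted hLF_mem hLF hLF1 hL hj hsj
      have hSAj' : SA (LF j) ≤ k := by
        have := hLF j (Finset.mem_Icc.mpr ⟨by rw [Finset.mem_Icc] at hj; omega,
          (Finset.mem_Icc.mp hj).2⟩) (by omega)
        omega
      obtain ⟨_, _, hlev'⟩ := chain_spec hn hlen hdollar hSA_mem hSA_surj hSA_sorted
        hLF_mem hLF hLF1 hL k (LF j) hmem hSAj'
      rw [← heq] at hlev'
      omega
    · -- j stops, i steps
      push_neg at hsi
      rw [chainF_stop (i := j) (by simp [hsj]), chainF_go (b := fun k => decide (¬ L k = L (k-1))) (i := i) (by simp [hsi])] at heq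
      obtain ⟨hmem, _, _, hSAi2, hlevi⟩ :=
        step_lemma hn hlen hdollar hSA_mem hSA_surj hSA_sorted hLF_mem hLF hLF1 hL hi hsi
      have hSAi' : SA (LF i) ≤ k := by
        have := hLF i (Finset.mem_Icc.mpr ⟨by rw [Finset.mem_Icc] at hi; omega,
          (Finset.mem_Icc.mp hi).2⟩) (by omega)
        omega
      obtain ⟨_, _, hlev'⟩ := chain_spec hn hlen hdollar hSA_mem hSA_surj hSA_sorted
        hLF_mem hLF hLF1 hL k (LF i) hmem hSAi'
      rw [heq] at hlev'
      omega
    · -- both step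
      push_neg at hsi hsj
      rw [chainF_go (b := fun k => decide (¬ L k = L (k-1))) (i := i) (by simp [hsi]),
        chainF_go (b := fun k => decide (¬ L k = L (k-1))) (i := j) (by simp [hsj])] at heq
      obtain ⟨hmemi, _, hSAvi, hSAi2, hlevi⟩ :=
        step_lemma hn hlen hdollar hSA_mem hSA_surj hSA_sorted hLF_mem hLF hLF1 hL hi hsi
      obtain ⟨hmemj, _, hSAvj, hSAj2, hlevj⟩ :=
        step_lemma hn hlen hdollar hSA_mem hSA_surj hSA_sorted hLF_mem hLF hLF1 hL hj hsj
      have := ih (LF i) (LF j) hmemi hmemj (by omega) (by omega) (by omega) heq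
      have hSAeq : SA i = SA j := by
        rw [this] at hSAvi
        omega
      exact SA_inj hSA_sorted (Finset.mem_Icc.mpr ⟨by rw [Finset.mem_Icc] at hi; omega,
        (Finset.mem_Icc.mp hi).2⟩) (Finset.mem_Icc.mpr ⟨by rw [Finset.mem_Icc] at hj; omega,
        (Finset.mem_Icc.mp hj).2⟩) hSAeq

theorem At_card_le :
    ∀ t : ℕ, (AtD n t T SA).card ≤ ((Finset.Icc 1 n).filter
      (fun i => i = 1 ∨ L i ≠ L (i - 1))).card := by
  intro t
  apply Finset.card_le_card_of_injOn (fun i => chainF (fun k => decide (¬ L k = L (k-1))) LF n i)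
  · intro i hi
    rw [Finset.mem_coe, AtD, Finset.mem_filter] at hi
    have hSAi := hSA_mem i (Finset.mem_Icc.mpr ⟨by
      rw [Finset.mem_Icc] at hi; omega, by
      have := (Finset.mem_Icc.mp hi.1).2; omega⟩)
    rw [Finset.mem_Icc] at hSAi
    obtain ⟨hmem, hrun, _⟩ := chain_spec hn hlen hdollar hSA_mem hSA_surj hSA_sorted
      hLF_mem hLF hLF1 hL n i hi.1 hSAi.2
    rw [Finset.mem_Icc] at hmem
    simp only [Finset.mem_coe]
    exact Finset.mem_filter.mpr ⟨Finset.mem_Icc.mpr ⟨by omega, hmem.2⟩, Or.inr hrun⟩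
  · intro i hi j hj heq
    rw [Finset.mem_coe, AtD, Finset.mem_filter] at hi hj
    have hSAi := hSA_mem i (Finset.mem_Icc.mpr ⟨by
      rw [Finset.mem_Icc] at hi; omega, by
      have := (Finset.mem_Icc.mp hi.1).2; omega⟩)
    have hSAj := hSA_mem j (Finset.mem_Icc.mpr ⟨by
      rw [Finset.mem_Icc] at hj; omega, by
      have := (Finset.mem_Icc.mp hj.1).2; omega⟩)
    rw [Finset.mem_Icc] at hSAi hSAj
    exact chain_inj hn hlen hdollar hSA_mem hSA_surj hSA_sorted hLF_mem hLF hLF1 hL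
      n i j hi.1 hj.1 hSAi.2 hSAj.2 (hi.2.trans hj.2.symm) heq

end Chain

end Aux

namespace Aux

noncomputable def PhiD (n : ℕ) (T : List ℕ) (SA : ℕ → ℕ) (Q : List ℕ) : ℕ × Bool :=
  if h : (RowsD n T SA Q).Nonempty ∧ (RowsD n T SA Q.dropLast).Nonempty then
    (if (RowsD n T SA Q).max' h.1 < (RowsD n T SA Q.dropLast).max' h.2
     then ((RowsD n T SA Q).max' h.1 + 1, false)
     else ((RowsD n T SA Q).min' h.1, true))
  else (0, false)

theorem PhiD_spec {n : ℕ} {T : List ℕ} {SA : ℕ → ℕ} {Q : List ℕ}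
    (h1 : (RowsD n T SA Q).Nonempty) {RP : Finset ℕ}
    (hRP : RowsD n T SA Q.dropLast = RP) (h2 : RP.Nonempty) :
    PhiD n T SA Q = if (RowsD n T SA Q).max' h1 < RP.max' h2
      then ((RowsD n T SA Q).max' h1 + 1, false)
      else ((RowsD n T SA Q).min' h1, true) := by
  subst hRP
  rw [PhiD, dif_pos ⟨h1, h2⟩]

section Kside

variable {σ n : ℕ} {T : List ℕ} {SA : ℕ → ℕ}
variable (hn : 2 ≤ n) (hlen : T.length = n)
variable (hSA_surj : ∀ j ∈ Finset.Icc 1 n, ∃ i ∈ Finset.Icc 1 n, SA i = j)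
variable (hSA_sorted : ∀ i j, i ∈ Finset.Icc 1 n → j ∈ Finset.Icc 1 n → i < j →
      List.Lex (· < ·) (sufx T (SA i)) (sufx T (SA j)))

include hlen hSA_surj in
theorem row_of_infix {S : List ℕ} (hS : S ≠ []) (hinf : S <:+: T) :
    ∃ i ∈ Finset.Icc 1 n, S <+: sufx T (SA i) := by
  obtain ⟨s, u, hT⟩ := hinf
  have hp : s.length + 1 ∈ Finset.Icc 1 n := by
    rw [Finset.mem_Icc]
    constructor
    · omega
    · have := congrArg List.length hT
      simp at this
      have hS1 : 1 ≤ S.length := by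
        cases S with
        | nil => exact absurd rfl hS
        | cons a l => simp
      omega
  obtain ⟨i, hiI, hi⟩ := hSA_surj (s.length + 1) hp
  refine ⟨i, hiI, ?_⟩
  rw [hi]
  unfold sufx
  have : s.length + 1 - 1 = s.length := by omega
  rw [this, ← hT]
  rw [List.append_assoc, List.drop_left]
  exact List.prefix_append S u

include hn hlen hSA_surj hSA_sorted in
theorem K_side {t : ℕ} {Q : List ℕ} (hQ : Q ∈ KsetD σ t T) :
    Q.length = t + 1 ∧ ∃ hne : (RowsD n T SA Q).Nonempty,
      ((PhiD n T SA Q = ((RowsD n T SA Q).max' hne + 1, false) ∧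
        (RowsD n T SA Q).max' hne + 1 ∈ AtD n t T SA) ∨
       (PhiD n T SA Q = ((RowsD n T SA Q).min' hne, true) ∧
        (RowsD n T SA Q).min' hne ∈ AtD n t T SA)) := by
  obtain ⟨P, ⟨hPinf, hPlen, hPch⟩, c, hcmem, rfl, hQinf⟩ := hQ
  have hdrop : (P ++ [c]).dropLast = P := List.dropLast_concat
  have hQlen : (P ++ [c]).length = t + 1 := by simp [hPlen]
  -- rows of Q nonempty
  obtain ⟨i0, hi0I, hi0p⟩ := row_of_infix hlen hSA_surj (S := P ++ [c]) (by simp) hQinf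
  have hQne : (RowsD n T SA (P ++ [c])).Nonempty :=
    ⟨i0, Finset.mem_filter.mpr ⟨hi0I, hi0p⟩⟩
  -- RQ ⊆ RP
  have hsub : RowsD n T SA (P ++ [c]) ⊆ RowsD n T SA P := by
    intro x hx
    rw [RowsD, Finset.mem_filter] at hx ⊢
    exact ⟨hx.1, (List.prefix_append P [c]).trans hx.2⟩
  have hRPne : (RowsD n T SA P).Nonempty := ⟨i0, hsub (Finset.mem_filter.mpr ⟨hi0I, hi0p⟩)⟩
  -- a second child
  have hfin : (childrenSet σ T P).Finite := by
    apply Set.Finite.subset ((Set.finite_Icc 1 σ).image (fun c => P ++ [c]))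
    rintro Q' ⟨c', hc', rfl, -⟩
    exact ⟨c', by simpa using hc', rfl⟩
  obtain ⟨a, b, ha, hb, hab⟩ := (Set.one_lt_ncard_iff hfin).mp (by omega)
  have hQmem : (P ++ [c]) ∈ childrenSet σ T P := ⟨c, hcmem, rfl, hQinf⟩
  obtain ⟨Q2, hQ2mem, hQ2ne⟩ : ∃ Q2 ∈ childrenSet σ T P, Q2 ≠ P ++ [c] := by
    by_cases haq : a = P ++ [c]
    · exact ⟨b, hb, by rw [← haq]; exact fun h => hab h.symm⟩
    · exact ⟨a, ha, haq⟩
  obtain ⟨c2, hc2mem, rfl, hQ2inf⟩ := hQ2mem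
  -- a row of Q2, in RP but not RQ
  obtain ⟨m, hmI, hmp⟩ := row_of_infix hlen hSA_surj (S := P ++ [c2]) (by simp) hQ2inf
  have hmRP : m ∈ RowsD n T SA P :=
    Finset.mem_filter.mpr ⟨hmI, (List.prefix_append P [c2]).trans hmp⟩
  have hmnotRQ : m ∉ RowsD n T SA (P ++ [c]) := by
    intro hm
    rw [RowsD, Finset.mem_filter] at hm
    exact hQ2ne (prefix_eq_of_length_eq hmp hm.2 (by simp))
  set eQ := (RowsD n T SA (P ++ [c])).max' hQne with heQ
  set bQ := (RowsD n T SA (P ++ [c])).min' hQne with hbQ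
  set eP := (RowsD n T SA P).max' hRPne with heP
  have heQmem : eQ ∈ RowsD n T SA (P ++ [c]) := Finset.max'_mem _ _
  have hbQmem : bQ ∈ RowsD n T SA (P ++ [c]) := Finset.min'_mem _ _
  have hePmem : eP ∈ RowsD n T SA P := Finset.max'_mem _ _
  have heQeP : eQ ≤ eP := Finset.le_max' _ _ (hsub heQmem)
  have hbQeQ : bQ ≤ eQ := Finset.le_max' _ _ hbQmem
  have hmem_of_rows : ∀ x, x ∈ RowsD n T SA P → x ∈ Finset.Icc 1 n := by
    intro x hx; exact (Finset.mem_filter.mp hx).1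
  have heQI := hmem_of_rows _ (hsub heQmem)
  have hbQI := hmem_of_rows _ (hsub hbQmem)
  have hePI := hmem_of_rows _ hePmem
  rw [Finset.mem_Icc] at heQI hbQI hePI
  have hm1 : 1 ≤ m ∧ m ≤ n := Finset.mem_Icc.mp hmI
  refine ⟨hQlen, hQne, ?_⟩
  rw [← heQ, ← hbQ]
  have hRPD : RowsD n T SA ((P ++ [c]).dropLast) = RowsD n T SA P := by rw [hdrop]
  have hPhi := PhiD_spec hQne hRPD hRPne
  rw [← heQ, ← hbQ, ← heP] at hPhi
  clear_value eQ bQ eP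
  by_cases hcase : eQ < eP
  · left
    constructor
    · rw [hPhi, if_pos hcase]
    · -- eQ + 1 ∈ AtD
      have hy_mem : eQ + 1 ∈ Finset.Icc 1 n := Finset.mem_Icc.mpr ⟨by omega, by omega⟩
      have hyRP : eQ + 1 ∈ RowsD n T SA P := by
        rw [RowsD, Finset.mem_filter]
        refine ⟨hy_mem, ?_⟩
        exact rows_convex (w1 := eQ) (w2 := eQ + 1) (w3 := eP) hSA_sorted
          (Finset.mem_Icc.mpr ⟨by omega, by omega⟩) hy_mem
          (Finset.mem_Icc.mpr ⟨by omega, by omega⟩) (by omega) (by omega)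
          (Finset.mem_filter.mp (hsub heQmem)).2 (Finset.mem_filter.mp hePmem).2
      have hynotRQ : ¬ ((P ++ [c]) <+: sufx T (SA (eQ + 1))) := by
        intro hpre
        have : eQ + 1 ∈ RowsD n T SA (P ++ [c]) := Finset.mem_filter.mpr ⟨hy_mem, hpre⟩
        have := Finset.le_max' _ _ this
        omega
      rw [AtD, Finset.mem_filter, Finset.mem_Icc]
      refine ⟨⟨by omega, by omega⟩, ?_⟩
      unfold levD
      have e1 : eQ + 1 - 1 = eQ := by omega
      rw [e1]
      rw [← hPlen]
      apply le_antisymm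
      · apply lcpLen_le P c
        · exact (Finset.mem_filter.mp heQmem).2
        · exact (Finset.mem_filter.mp hyRP).2
        · exact hynotRQ
      · apply lcpLen_ge
        · exact (Finset.mem_filter.mp (hsub heQmem)).2
        · exact (Finset.mem_filter.mp hyRP).2
  · right
    have hePeQ : eP = eQ := by omega
    have hmle : m ≤ eQ := by
      have := Finset.le_max' _ _ hmRP
      omega
    have hmbQ : m < bQ := by
      by_contra hge
      push_neg at hge
      apply hmnotRQ
      rw [RowsD, Finset.mem_filter]
      refine ⟨hmI, ?_⟩
      exact rows_convex (w1 := bQ) (w2 := m) (w3 := eQ) hSA_sorted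
        (Finset.mem_Icc.mpr ⟨by omega, by omega⟩) hmI
        (Finset.mem_Icc.mpr ⟨by omega, by omega⟩) hge (by omega)
        (Finset.mem_filter.mp hbQmem).2 (Finset.mem_filter.mp heQmem).2
    constructor
    · rw [hPhi, if_neg hcase]
    · have hx_mem : bQ - 1 ∈ Finset.Icc 1 n := Finset.mem_Icc.mpr ⟨by omega, by omega⟩
      have hxRP : bQ - 1 ∈ RowsD n T SA P := by
        rw [RowsD, Finset.mem_filter]
        refine ⟨hx_mem, ?_⟩
        exact rows_convex (w1 := m) (w2 := bQ - 1) (w3 := eP) hSA_sorted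
          hmI hx_mem (Finset.mem_Icc.mpr ⟨by omega, by omega⟩)
          (by omega) (by omega)
          (Finset.mem_filter.mp hmRP).2 (Finset.mem_filter.mp hePmem).2
      have hxnotRQ : ¬ ((P ++ [c]) <+: sufx T (SA (bQ - 1))) := by
        intro hpre
        have : bQ - 1 ∈ RowsD n T SA (P ++ [c]) := Finset.mem_filter.mpr ⟨hx_mem, hpre⟩
        have := Finset.min'_le _ _ this
        omega
      rw [AtD, Finset.mem_filter, Finset.mem_Icc]
      refine ⟨⟨by omega, by omega⟩, ?_⟩
      unfold levD
      rw [lcpLen_comm, ← hPlen]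
      apply le_antisymm
      · apply lcpLen_le P c
        · exact (Finset.mem_filter.mp hbQmem).2
        · exact (Finset.mem_filter.mp hxRP).2
        · exact hxnotRQ
      · apply lcpLen_ge
        · exact (Finset.mem_filter.mp (hsub hbQmem)).2
        · exact (Finset.mem_filter.mp hxRP).2

end Kside

end Aux

theorem stmt12
    (σ n : ℕ) (T : List ℕ)
    (hn : 2 ≤ n) (hlen : T.length = n)
    (halpha : ∀ c ∈ T, c ∈ Finset.Icc 1 σ)
    (hocc : ∀ c ∈ Finset.Icc 1 σ, c ∈ T)
    (hdollar : ∀ i ∈ Finset.Icc 1 (n - 1), idx T i ≠ idx T n)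
    (SA : ℕ → ℕ)
    (hSA_mem : ∀ i ∈ Finset.Icc 1 n, SA i ∈ Finset.Icc 1 n)
    (hSA_surj : ∀ j ∈ Finset.Icc 1 n, ∃ i ∈ Finset.Icc 1 n, SA i = j)
    (hSA_sorted : ∀ i j, i ∈ Finset.Icc 1 n → j ∈ Finset.Icc 1 n → i < j →
      List.Lex (· < ·) (sufx T (SA i)) (sufx T (SA j)))
    (LF : ℕ → ℕ)
    (hLF_mem : ∀ i ∈ Finset.Icc 1 n, LF i ∈ Finset.Icc 1 n)
    (hLF : ∀ i ∈ Finset.Icc 1 n, SA i ≠ 1 → SA (LF i) = SA i - 1)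
    (hLF1 : ∀ i ∈ Finset.Icc 1 n, SA i = 1 → SA (LF i) = n)
    (L : ℕ → ℕ)
    (hL : ∀ i ∈ Finset.Icc 1 n, L i = idx T (SA (LF i)))
 :
    ∀ t : ℕ, (KsetD σ t T).ncard ≤ 2 * (SstartSet n L).card := by

  intro t
  have hKle : (KsetD σ t T).ncard ≤
      ((Aux.AtD n t T SA) ×ˢ (Finset.univ : Finset Bool)).card := by
    have := Set.ncard_le_ncard_of_injOn (s := KsetD σ t T)
      (t := (↑((Aux.AtD n t T SA) ×ˢ (Finset.univ : Finset Bool)) : Set (ℕ × Bool)))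
      (Aux.PhiD n T SA) ?_ ?_ ?_
    · rwa [Set.ncard_coe_finset] at this
    · intro Q hQ
      obtain ⟨hQlen, hne, hor⟩ := Aux.K_side hn hlen hSA_surj hSA_sorted hQ
      rw [Finset.mem_coe, Finset.mem_product]
      rcases hor with ⟨hPhi, hmem⟩ | ⟨hPhi, hmem⟩ <;>
        (rw [hPhi]; exact ⟨hmem, Finset.mem_univ _⟩)
    · intro Q1 h1 Q2 h2 heq
      obtain ⟨hQlen1, hne1, hor1⟩ := Aux.K_side hn hlen hSA_surj hSA_sorted h1
      obtain ⟨hQlen2, hne2, hor2⟩ := Aux.K_side hn hlen hSA_surj hSA_sorted h2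
      rcases hor1 with ⟨hPhi1, _⟩ | ⟨hPhi1, _⟩ <;> rcases hor2 with ⟨hPhi2, _⟩ | ⟨hPhi2, _⟩ <;>
          rw [hPhi1, hPhi2, Prod.mk.injEq] at heq
      · have hM : (Aux.RowsD n T SA Q1).max' hne1 = (Aux.RowsD n T SA Q2).max' hne2 := by
          omega
        have hm1 := Finset.max'_mem _ hne1
        have hm2 := Finset.max'_mem _ hne2
        rw [hM] at hm1
        simp only [Aux.RowsD, Finset.mem_filter] at hm1 hm2
        exact Aux.prefix_eq_of_length_eq hm1.2 hm2.2 (by omega)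
      · exact absurd heq.2 (by simp)
      · exact absurd heq.2 (by simp)
      · have hM : (Aux.RowsD n T SA Q1).min' hne1 = (Aux.RowsD n T SA Q2).min' hne2 := heq.1
        have hm1 := Finset.min'_mem _ hne1
        have hm2 := Finset.min'_mem _ hne2
        rw [hM] at hm1
        simp only [Aux.RowsD, Finset.mem_filter] at hm1 hm2
        exact Aux.prefix_eq_of_length_eq hm1.2 hm2.2 (by omega)
    · exact Finset.finite_toSet _
  have hAle := Aux.At_card_le hn hlen hdollar hSA_mem hSA_surj hSA_sorted hLF_mem hLF hLF1 hL t
  have hSeq : SstartSet n L = (Finset.Icc 1 n).filter (fun i => i = 1 ∨ L i ≠ L (i - 1)) := rfl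
  rw [Finset.card_product, Finset.card_univ, Fintype.card_bool] at hKle
  rw [hSeq]
  omega
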